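/- Let M ≥ 3 be an integer and let a ∈ ℝ with a ≠ 0. Then the set of real numbers r for which the set {a·r^i : i = 0, 1, …, M−1} has complexity strictly less than M−1 is finite. -/

import Mathlib

/-- The (additive) complexity of a set `A` of reals: the smallest positive integer `θ`
for which there exist reals `x 1, ..., x θ, y 1, ..., y θ` with
`A ⊆ {x 1, y 1} + ... + {x θ, y θ}` (Minkowski sumset). -/
noncomputable def complexity (A : Set ℝ) : ℕ :=
  sInf {θ : ℕ | 0 < θ ∧ ∃ x y : Fin θ → ℝ,
    A ⊆ {t : ℝ | ∃ z : Fin θ → ℝ, (∀ i, z i = x i ∨ z i = y i) ∧ t = ∑ i, z i}}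

lemma exists_kernel {m n : ℕ} (hnm : n < m) (W : Fin m → Fin n → ℝ) :
    ∃ c : Fin m → ℝ, c ≠ 0 ∧ ∀ i, ∑ j, c j * W j i = 0 := by
  have hW : ¬ LinearIndependent ℝ W := by
    intro h
    have := h.fintype_card_le_finrank
    rw [Module.finrank_pi] at this
    simp at this
    omega
  rw [Fintype.not_linearIndependent_iff] at hW
  obtain ⟨g, hg, j, hj⟩ := hW
  refine ⟨g, fun h0 => hj (congrFun h0 j), fun i => ?_⟩
  have := congrFun hg i
  simpa [Finset.sum_apply] using this

noncomputable def gpPoly {m : ℕ} (c : Fin m → ℝ) : Polynomial ℝ :=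
  ∑ j : Fin m, Polynomial.C (c j) * (Polynomial.X ^ ((j : ℕ) + 1) - 1)

lemma gpPoly_coeff {m : ℕ} (c : Fin m → ℝ) (j0 : Fin m) :
    (gpPoly c).coeff ((j0 : ℕ) + 1) = c j0 := by
  rw [gpPoly, Polynomial.finset_sum_coeff]
  rw [Finset.sum_eq_single j0]
  · simp [Polynomial.coeff_X_pow, Polynomial.coeff_one]
  · intro b _ hb
    have : ¬ ((j0 : ℕ) + 1 = (b : ℕ) + 1) := by
      simp [Fin.val_eq_val]; exact fun h => hb h.symm
    simp [Polynomial.coeff_X_pow, Polynomial.coeff_one, this]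
    exact fun h => absurd (by omega) this
  · simp

lemma gpPoly_ne_zero {m : ℕ} {c : Fin m → ℝ} (hc : c ≠ 0) : gpPoly c ≠ 0 := by
  obtain ⟨j0, hj0⟩ := Function.ne_iff.mp hc
  intro h
  apply hj0
  have := gpPoly_coeff c j0
  rw [h] at this
  simpa using this.symm

lemma gpPoly_eval {m : ℕ} (c : Fin m → ℝ) (r : ℝ) :
    (gpPoly c).eval r = ∑ j : Fin m, c j * (r ^ ((j : ℕ) + 1) - 1) := by
  simp [gpPoly, Polynomial.eval_finset_sum]

lemma mem_cset (M : ℕ) (hM : 3 ≤ M) (a r : ℝ) :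
    0 < M - 1 ∧ ∃ x y : Fin (M-1) → ℝ,
      {t : ℝ | ∃ i : ℕ, i < M ∧ t = a * r ^ i} ⊆
      {t : ℝ | ∃ z : Fin (M-1) → ℝ, (∀ i, z i = x i ∨ z i = y i) ∧ t = ∑ i, z i} := by
  have hm : 2 ≤ M - 1 := by omega
  haveI : NeZero (M - 1) := ⟨by omega⟩
  have h0 : ((0 : Fin (M-1)) : ℕ) = 0 := Fin.val_zero _
  refine ⟨by omega, fun i => if i = 0 then a else 0,
    fun i => if i = 0 then a * r else a * r ^ ((i : ℕ) + 1) - a, ?_⟩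
  rintro t ⟨k, hk, rfl⟩
  refine ⟨fun i => (if i = (0 : Fin (M-1)) then (if k ≤ 1 then a * r ^ k else a) else 0)
    + (if (i : ℕ) + 1 = k ∧ 2 ≤ k then a * r ^ k - a else 0), ?_, ?_⟩
  · intro i
    by_cases hi : i = (0 : Fin (M-1))
    · subst hi
      have hc : ¬ (((0 : Fin (M-1)) : ℕ) + 1 = k ∧ 2 ≤ k) := by rw [h0]; omega
      rcases Nat.lt_or_ge k 2 with h2 | h2
      · interval_cases k
        · left; simp [hc]
        · right; simp [hc]
      · left
        simp [(show ¬ k ≤ 1 by omega)]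
        intro h1 h2
        exact absurd h1 (by omega)
    · by_cases hc : (i : ℕ) + 1 = k ∧ 2 ≤ k
      · right; simp [hi, hc, hc.1]
      · left; simp [hi, hc]
  · rw [Finset.sum_add_distrib, Finset.sum_ite_eq' Finset.univ (0 : Fin (M-1))]
    simp only [Finset.mem_univ, if_true]
    rcases Nat.lt_or_ge k 2 with h2 | h2
    · have hc : ∀ i : Fin (M-1), ¬ ((i : ℕ) + 1 = k ∧ 2 ≤ k) := fun i => by omega
      simp [hc, (show k ≤ 1 by omega)]
    · have hkm : k - 1 < M - 1 := by omega
      have hc : ∀ i : Fin (M-1), ((i : ℕ) + 1 = k ∧ 2 ≤ k) ↔ i = ⟨k - 1, hkm⟩ := by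
        intro i
        constructor
        · rintro ⟨h1, -⟩; exact Fin.ext (by simp; omega)
        · rintro rfl; exact ⟨by simp; omega, h2⟩
      simp only [hc]
      rw [Finset.sum_ite_eq' Finset.univ, if_pos (Finset.mem_univ _),
        if_neg (show ¬ k ≤ 1 by omega)]
      ring

/-- For fixed nonzero `a`, all but finitely many common ratios `r` yield geometric
progressions of length `M` with the highest possible complexity `M - 1`. -/
theorem stmt_14 (M : ℕ) (hM : 3 ≤ M) (a : ℝ) (ha : a ≠ 0) :
    {r : ℝ | complexity {t : ℝ | ∃ i : ℕ, i < M ∧ t = a * r ^ i} < M - 1}.Finite := by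
  classical
  set m := M - 1 with hmdef
  have hm : 2 ≤ m := by omega
  let F : Fin 3 → ℝ := ![-1, 0, 1]
  let I := Σ θ' : Fin m, (Fin m → Fin (θ' : ℕ) → Fin 3)
  let cc : I → Fin m → ℝ :=
    fun p => Classical.choose (exists_kernel p.1.isLt (fun j i => F (p.2 j i)))
  have ccSpec : ∀ p : I, cc p ≠ 0 ∧ ∀ i, ∑ j, cc p j * F (p.2 j i) = 0 :=
    fun p => Classical.choose_spec (exists_kernel p.1.isLt (fun j i => F (p.2 j i)))
  apply Set.Finite.subset
    (Set.finite_iUnion (fun p : I => Polynomial.finite_setOf_isRoot (gpPoly_ne_zero (ccSpec p).1)))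
  intro r hr
  simp only [Set.mem_setOf_eq] at hr
  set A := {t : ℝ | ∃ i : ℕ, i < M ∧ t = a * r ^ i} with hA
  set S := {θ : ℕ | 0 < θ ∧ ∃ x y : Fin θ → ℝ,
    A ⊆ {t : ℝ | ∃ z : Fin θ → ℝ, (∀ i, z i = x i ∨ z i = y i) ∧ t = ∑ i, z i}} with hS
  have hne : S.Nonempty := ⟨m, mem_cset M hM a r⟩
  have hmem : complexity A ∈ S := Nat.sInf_mem hne
  set θ := complexity A with hθdef
  have hθ : θ < m := hr
  obtain ⟨-, x, y, hsub⟩ := hmem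
  have hz : ∀ k : Fin M, ∃ z : Fin θ → ℝ,
      (∀ i, z i = x i ∨ z i = y i) ∧ a * r ^ (k : ℕ) = ∑ i, z i :=
    fun k => hsub ⟨(k : ℕ), k.isLt, rfl⟩
  choose Z hZor hZsum using hz
  let ε : Fin M → Fin θ → ℝ := fun k i => if Z k i = x i then 0 else 1
  have hZeq : ∀ k i, Z k i = x i + ε k i * (y i - x i) := by
    intro k i
    by_cases h : Z k i = x i
    · simp [ε, h]
    · rcases hZor k i with h' | h'
      · exact absurd h' h
      · simp only [ε, if_neg h, h']; ring
  have hεval : ∀ k i, ε k i = 0 ∨ ε k i = 1 := by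
    intro k i; by_cases h : Z k i = x i <;> simp [ε, h]
  let k0 : Fin M := ⟨0, by omega⟩
  let kj : Fin m → Fin M := fun j => ⟨(j : ℕ) + 1, by omega⟩
  let Wr : Fin m → Fin θ → ℝ := fun j i => ε (kj j) i - ε k0 i
  have hWr3 : ∀ j i, Wr j i = -1 ∨ Wr j i = 0 ∨ Wr j i = 1 := by
    intro j i
    rcases hεval (kj j) i with h1 | h1 <;> rcases hεval k0 i with h2 | h2 <;>
      simp [Wr, h1, h2]
  let g : Fin m → Fin θ → Fin 3 := fun j i =>
    if Wr j i = -1 then 0 else if Wr j i = 0 then 1 else 2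
  have hFg : ∀ j i, F (g j i) = Wr j i := by
    intro j i
    rcases hWr3 j i with h | h | h <;> simp [g, h, F] <;> norm_num [Matrix.cons_val_two]
  let p : I := ⟨⟨θ, hθ⟩, g⟩
  have key : ∀ j : Fin m, a * r ^ ((j : ℕ) + 1) - a = ∑ i, Wr j i * (y i - x i) := by
    intro j
    have e1 : a * r ^ ((j : ℕ) + 1) = ∑ i, Z (kj j) i := hZsum (kj j)
    have e0 : a = ∑ i, Z k0 i := by simpa [k0] using hZsum k0
    rw [e1, e0, ← Finset.sum_sub_distrib]
    refine Finset.sum_congr rfl fun i _ => ?_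
    rw [hZeq (kj j) i, hZeq k0 i]
    simp only [Wr]
    ring
  have hsum0 : ∑ j : Fin m, cc p j * (a * r ^ ((j : ℕ) + 1) - a) = 0 := by
    calc ∑ j : Fin m, cc p j * (a * r ^ ((j : ℕ) + 1) - a)
        = ∑ j : Fin m, ∑ i, cc p j * (Wr j i * (y i - x i)) := by
          refine Finset.sum_congr rfl fun j _ => ?_
          rw [key j, Finset.mul_sum]
      _ = ∑ i, ∑ j : Fin m, cc p j * (Wr j i * (y i - x i)) := Finset.sum_comm
      _ = ∑ i, (∑ j : Fin m, cc p j * Wr j i) * (y i - x i) := by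
          refine Finset.sum_congr rfl fun i _ => ?_
          rw [Finset.sum_mul]
          exact Finset.sum_congr rfl fun j _ => by ring
      _ = 0 := by
          refine Finset.sum_eq_zero fun i _ => ?_
          have h2 := (ccSpec p).2 i
          have : ∑ j : Fin m, cc p j * Wr j i = 0 := by
            rw [← h2]
            exact Finset.sum_congr rfl fun j _ => by rw [hFg]
          rw [this, zero_mul]
  refine Set.mem_iUnion.2 ⟨p, ?_⟩
  show (gpPoly (cc p)).IsRoot r
  have : a * (gpPoly (cc p)).eval r = 0 := by
    rw [gpPoly_eval, Finset.mul_sum, ← hsum0]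
    exact Finset.sum_congr rfl fun j _ => by ring
  rcases mul_eq_zero.mp this with h | h
  · exact absurd h ha
  · exact h
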